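/- For every 2-satisfiable CNF formula F with m clauses, there is a truth assignment satisfying at least phi*m clauses, where phi = (sqrt(5)-1)/2 is the golden ratio conjugate (so phi satisfies 1 - phi^2 = phi). -/

import Mathlib

noncomputable def ls_phi : ℝ := (Real.sqrt 5 - 1) / 2

lemma ls_sqrt5_sq : Real.sqrt 5 ^ 2 = 5 := Real.sq_sqrt (by norm_num)
lemma ls_sqrt5_nonneg : 0 ≤ Real.sqrt 5 := Real.sqrt_nonneg 5
lemma ls_sqrt5_gt : 2 < Real.sqrt 5 := by nlinarith [ls_sqrt5_sq, ls_sqrt5_nonneg]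
lemma ls_sqrt5_lt : Real.sqrt 5 < 3 := by nlinarith [ls_sqrt5_sq, ls_sqrt5_nonneg]

lemma ls_phi_pos : 0 < ls_phi := by unfold ls_phi; nlinarith [ls_sqrt5_gt]
lemma ls_phi_lt_one : ls_phi < 1 := by unfold ls_phi; nlinarith [ls_sqrt5_lt]
lemma ls_phi_half : 1 - ls_phi ≤ ls_phi := by unfold ls_phi; nlinarith [ls_sqrt5_gt]
lemma ls_phi_sq : ls_phi * ls_phi = 1 - ls_phi := by
  unfold ls_phi; nlinarith [ls_sqrt5_sq]

lemma ls_core {ι : Type*} [Fintype ι] [DecidableEq ι] (g : ι → Bool → ℝ) :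
    ∑ τ : ι → Bool, ∏ i, g i (τ i) = ∏ i, (g i true + g i false) := by
  have h := Finset.prod_univ_sum (fun _ : ι => (Finset.univ : Finset Bool)) g
  rw [Fintype.piFinset_univ] at h
  rw [← h]
  exact Finset.prod_congr rfl fun i _ => Fintype.sum_bool _

theorem stmt6 {V : Type*} (F : List (Finset (V × Bool)))
    (hne : ∀ C ∈ F, C.Nonempty)
    (h2sat : ∀ C₁ ∈ F, ∀ C₂ ∈ F, ∃ σ : V → Bool,
      (∃ l ∈ C₁, σ l.1 = l.2) ∧ (∃ l ∈ C₂, σ l.1 = l.2)) :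
    ∃ σ : V → Bool,
      ((Real.sqrt 5 - 1) / 2) * F.length
        ≤ (F.countP (fun C => decide (∃ l ∈ C, σ l.1 = l.2)) : ℝ) := by
  classical
  -- the set of variables appearing in F
  set vars : Finset V := F.toFinset.biUnion (fun C => C.image Prod.fst) with hvars
  have hmemvars : ∀ C ∈ F, ∀ l ∈ C, l.1 ∈ vars := by
    intro C hC l hl
    simp only [hvars, Finset.mem_biUnion, List.mem_toFinset]
    exact ⟨C, hC, Finset.mem_image_of_mem _ hl⟩
  -- biased probabilities
  set p : V → ℝ := fun x =>
    if ({((x, false))} : Finset (V × Bool)) ∈ F then 1 - ls_phi else ls_phi with hp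
  have hp_lb : ∀ x, 1 - ls_phi ≤ p x := by
    intro x; simp only [hp]; split
    · exact le_refl _
    · exact ls_phi_half
  have hp_ub : ∀ x, p x ≤ ls_phi := by
    intro x; simp only [hp]; split
    · exact ls_phi_half
    · exact le_refl _
  set q : V → Bool → ℝ := fun x b => if b then p x else 1 - p x with hq
  have hq0 : ∀ x b, 0 ≤ q x b := by
    intro x b; simp only [hq]
    cases b <;> simp
    · nlinarith [hp_ub x, ls_phi_lt_one]
    · nlinarith [hp_lb x, ls_phi_lt_one]
  have hq_ub : ∀ x b, q x b ≤ ls_phi := by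
    intro x b; simp only [hq]
    cases b <;> simp
    · nlinarith [hp_lb x]
    · exact hp_ub x
  have hq_sum : ∀ x, q x true + q x false = 1 := by
    intro x; simp [hq]
  -- extension of an assignment on vars to all of V
  set ext : ({x // x ∈ vars} → Bool) → V → Bool :=
    fun τ x => if h : x ∈ vars then τ ⟨x, h⟩ else false with hext
  have hext_eq : ∀ τ (x : V) (h : x ∈ vars), ext τ x = τ ⟨x, h⟩ := by
    intro τ x h; simp [hext, h]
  -- the weight of each assignment
  set W : ({x // x ∈ vars} → Bool) → ℝ := fun τ => ∏ i : {x // x ∈ vars}, q i.1 (τ i) with hW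
  have hW0 : ∀ τ, 0 ≤ W τ := fun τ => Finset.prod_nonneg (fun i _ => hq0 _ _)
  have hWsum : ∑ τ : {x // x ∈ vars} → Bool, W τ = 1 := by
    rw [show (fun τ : {x // x ∈ vars} → Bool => ∏ i, q i.1 (τ i)) = W from rfl] at *
    calc ∑ τ : {x // x ∈ vars} → Bool, W τ
        = ∏ i : {x // x ∈ vars}, (q i.1 true + q i.1 false) := ls_core _
      _ = 1 := Finset.prod_eq_one fun i _ => hq_sum i.1
  -- per-clause expectation bound
  have hclause : ∀ C ∈ F, ls_phi ≤ ∑ τ : {x // x ∈ vars} → Bool,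
      W τ * (if ∃ l ∈ C, ext τ l.1 = l.2 then (1 : ℝ) else 0) := by
    intro C hC
    set g : {x // x ∈ vars} → Bool → ℝ :=
      fun i b => if ((i.1 : V), b) ∈ C then 0 else q i.1 b with hg
    have hterm : ∀ τ, W τ * (if ∃ l ∈ C, ext τ l.1 = l.2 then (1 : ℝ) else 0)
        = W τ - ∏ i, g i (τ i) := by
      intro τ
      by_cases hs : ∃ l ∈ C, ext τ l.1 = l.2
      · obtain ⟨l, hl, hlv⟩ := hs
        have hv := hmemvars C hC l hl
        have hz : g ⟨l.1, hv⟩ (τ ⟨l.1, hv⟩) = 0 := by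
          have hmem : ((l.1 : V), τ ⟨l.1, hv⟩) ∈ C := by
            rw [← hext_eq τ l.1 hv, hlv]
            simpa using hl
          simp [hg, hmem]
        have hzero : ∏ i : {x // x ∈ vars}, g i (τ i) = 0 :=
          Finset.prod_eq_zero (f := fun i => g i (τ i)) (Finset.mem_univ ⟨l.1, hv⟩) hz
        rw [if_pos ⟨l, hl, hlv⟩, hzero]
        ring
      · have heq : ∀ i : {x // x ∈ vars}, g i (τ i) = q i.1 (τ i) := by
          intro i
          have hnot : ((i.1 : V), τ i) ∉ C := by
            intro hmem
            exact hs ⟨(i.1, τ i), hmem, by rw [hext_eq τ i.1 i.2]⟩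
          simp [hg, hnot]
        rw [if_neg hs, Finset.prod_congr rfl (fun i _ => heq i)]
        simp [hW]
    -- failure probability factors
    set f : {x // x ∈ vars} → ℝ := fun i => g i true + g i false with hf
    have hgle : ∀ i b, g i b ≤ q i.1 b := by
      intro i b; simp only [hg]; split
      · exact hq0 i.1 b
      · exact le_refl _
    have hg0 : ∀ i b, 0 ≤ g i b := by
      intro i b; simp only [hg]; split
      · exact le_refl _
      · exact hq0 i.1 b
    have hf0 : ∀ i, 0 ≤ f i := fun i => add_nonneg (hg0 i true) (hg0 i false)
    have hf1 : ∀ i, f i ≤ 1 := by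
      intro i
      calc f i ≤ q i.1 true + q i.1 false := add_le_add (hgle i true) (hgle i false)
        _ = 1 := hq_sum i.1
    have hfb : ∀ (x : V) (hx : x ∈ vars) (b : Bool),
        ((x, b) ∈ C) → f ⟨x, hx⟩ ≤ ls_phi := by
      intro x hx b hb
      cases b
      · have hz : g ⟨x, hx⟩ false = 0 := by simp [hg, hb]
        simp only [hf, hz, add_zero]
        exact le_trans (hgle _ true) (hq_ub x true)
      · have hz : g ⟨x, hx⟩ true = 0 := by simp [hg, hb]
        simp only [hf, hz, zero_add]
        exact le_trans (hgle _ false) (hq_ub x false)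
    -- the key product bound
    obtain ⟨l₁, hl₁⟩ := hne C hC
    have hv₁ := hmemvars C hC l₁ hl₁
    have hmem₁ : (l₁.1, l₁.2) ∈ C := by simpa using hl₁
    have hprodle : ∏ i, f i ≤ 1 - ls_phi := by
      by_cases hunit : ∀ l ∈ C, l = l₁
      · -- unit clause
        have hCeq : C = {l₁} := Finset.eq_singleton_iff_unique_mem.mpr ⟨hl₁, hunit⟩
        have hfi : f ⟨l₁.1, hv₁⟩ ≤ 1 - ls_phi := by
          cases hb : l₁.2 with
          | false =>
            have hmemf : (l₁.1, false) ∈ C := by rw [← hb]; exact hmem₁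
            have hl₁eq : l₁ = (l₁.1, false) := by rw [← hb]
            have hFmem : ({((l₁.1, false))} : Finset (V × Bool)) ∈ F := by
              rw [← hl₁eq, ← hCeq]; exact hC
            have hpx : p l₁.1 = 1 - ls_phi := by simp only [hp]; rw [if_pos hFmem]
            have hntr : ((l₁.1 : V), true) ∉ C := by
              intro h
              rw [hCeq, Finset.mem_singleton, hl₁eq] at h
              simp at h
            have : f ⟨l₁.1, hv₁⟩ = p l₁.1 := by
              simp [hf, hg, hmemf, hntr, hq]
            rw [this, hpx]
          | true =>
            have hmemt : (l₁.1, true) ∈ C := by rw [← hb]; exact hmem₁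
            have hnf : ((l₁.1 : V), false) ∉ C := by
              intro h
              rw [hCeq, Finset.mem_singleton] at h
              have := congrArg Prod.snd h
              simp [hb] at this
            have hpx : p l₁.1 = ls_phi := by
              simp only [hp]; rw [if_neg]
              intro hFmem
              obtain ⟨σ, ⟨l, hl, hlv⟩, ⟨l', hl', hlv'⟩⟩ := h2sat C hC _ hFmem
              rw [hCeq, Finset.mem_singleton] at hl
              rw [Finset.mem_singleton] at hl'
              subst hl; subst hl'
              rw [hb] at hlv
              simp only at hlv'
              rw [hlv'] at hlv
              exact Bool.false_ne_true hlv
            have : f ⟨l₁.1, hv₁⟩ = 1 - p l₁.1 := by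
              simp [hf, hg, hmemt, hnf, hq]
            rw [this, hpx]
        calc ∏ i, f i
            = f ⟨l₁.1, hv₁⟩ * ∏ i ∈ Finset.univ.erase ⟨l₁.1, hv₁⟩, f i :=
              (Finset.mul_prod_erase Finset.univ f (Finset.mem_univ _)).symm
          _ ≤ f ⟨l₁.1, hv₁⟩ * 1 :=
              mul_le_mul_of_nonneg_left
                (Finset.prod_le_one (fun i _ => hf0 i) (fun i _ => hf1 i)) (hf0 _)
          _ = f ⟨l₁.1, hv₁⟩ := mul_one _
          _ ≤ 1 - ls_phi := hfi
      · push_neg at hunit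
        obtain ⟨l₂, hl₂, hne₂⟩ := hunit
        have hv₂ := hmemvars C hC l₂ hl₂
        have hmem₂ : (l₂.1, l₂.2) ∈ C := by simpa using hl₂
        by_cases hvv : l₂.1 = l₁.1
        · -- same variable, opposite signs: factor is 0
          have hbb : l₂.2 ≠ l₁.2 := by
            intro h; exact hne₂ (Prod.ext hvv h)
          have hmt : ((l₁.1 : V), true) ∈ C := by
            cases hb1 : l₁.2
            · cases hb2 : l₂.2
              · rw [hb1, hb2] at hbb; simp at hbb
              · rw [← hb2, ← hvv]; exact hmem₂
            · rw [← hb1]; exact hmem₁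
          have hmf : ((l₁.1 : V), false) ∈ C := by
            cases hb1 : l₁.2
            · rw [← hb1]; exact hmem₁
            · cases hb2 : l₂.2
              · rw [← hb2, ← hvv]; exact hmem₂
              · rw [hb1, hb2] at hbb; simp at hbb
          have hfz : f ⟨l₁.1, hv₁⟩ = 0 := by simp [hf, hg, hmt, hmf]
          have : ∏ i, f i = 0 := Finset.prod_eq_zero (Finset.mem_univ _) hfz
          rw [this]
          linarith [ls_phi_lt_one]
        · -- two distinct variables
          have hne_i : (⟨l₂.1, hv₂⟩ : {x // x ∈ vars}) ≠ ⟨l₁.1, hv₁⟩ := by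
            intro h; exact hvv (congrArg Subtype.val h)
          have hb₁ : f ⟨l₁.1, hv₁⟩ ≤ ls_phi := hfb l₁.1 hv₁ l₁.2 hmem₁
          have hb₂ : f ⟨l₂.1, hv₂⟩ ≤ ls_phi := hfb l₂.1 hv₂ l₂.2 hmem₂
          have hrest1 : ∏ i ∈ (Finset.univ.erase ⟨l₁.1, hv₁⟩).erase ⟨l₂.1, hv₂⟩, f i ≤ 1 :=
            Finset.prod_le_one (fun i _ => hf0 i) (fun i _ => hf1 i)
          have hrest0 : 0 ≤ ∏ i ∈ (Finset.univ.erase ⟨l₁.1, hv₁⟩).erase ⟨l₂.1, hv₂⟩, f i :=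
            Finset.prod_nonneg (fun i _ => hf0 i)
          calc ∏ i, f i
              = f ⟨l₁.1, hv₁⟩ * ∏ i ∈ Finset.univ.erase ⟨l₁.1, hv₁⟩, f i :=
                (Finset.mul_prod_erase Finset.univ f (Finset.mem_univ _)).symm
            _ = f ⟨l₁.1, hv₁⟩ * (f ⟨l₂.1, hv₂⟩ *
                  ∏ i ∈ (Finset.univ.erase ⟨l₁.1, hv₁⟩).erase ⟨l₂.1, hv₂⟩, f i) := by
                rw [Finset.mul_prod_erase _ f
                  (Finset.mem_erase.mpr ⟨hne_i, Finset.mem_univ _⟩)]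
            _ ≤ ls_phi * (ls_phi * 1) := by
                apply mul_le_mul hb₁ _ (mul_nonneg (hf0 _) hrest0) ls_phi_pos.le
                exact mul_le_mul hb₂ hrest1 hrest0 ls_phi_pos.le
            _ = 1 - ls_phi := by rw [mul_one, ls_phi_sq]
    calc ls_phi = 1 - (1 - ls_phi) := by ring
      _ ≤ 1 - ∏ i, f i := by linarith [hprodle]
      _ = ∑ τ : {x // x ∈ vars} → Bool, (W τ - ∏ i, g i (τ i)) := by
          rw [Finset.sum_sub_distrib, hWsum, ls_core]
      _ = ∑ τ : {x // x ∈ vars} → Bool,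
            W τ * (if ∃ l ∈ C, ext τ l.1 = l.2 then (1 : ℝ) else 0) :=
          Finset.sum_congr rfl (fun τ _ => (hterm τ).symm)
  -- expected number of satisfied clauses, by induction over the clause list
  have hmain : ∀ (L : List (Finset (V × Bool))), (∀ C ∈ L, C ∈ F) →
      ls_phi * L.length ≤ ∑ τ : {x // x ∈ vars} → Bool,
        W τ * ((L.countP (fun C => decide (∃ l ∈ C, ext τ l.1 = l.2)) : ℕ) : ℝ) := by
    intro L
    induction L with
    | nil => intro _; simp
    | cons C L ih =>
      intro hL
      have hC := hL C List.mem_cons_self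
      have ihL := ih (fun D hD => hL D (List.mem_cons_of_mem _ hD))
      have hcnt : ∀ τ, (((C :: L).countP (fun D => decide (∃ l ∈ D, ext τ l.1 = l.2)) : ℕ) : ℝ)
          = ((L.countP (fun D => decide (∃ l ∈ D, ext τ l.1 = l.2)) : ℕ) : ℝ)
            + (if ∃ l ∈ C, ext τ l.1 = l.2 then (1 : ℝ) else 0) := by
        intro τ
        rw [List.countP_cons]
        simp only [decide_eq_true_eq]
        split <;> push_cast <;> ring
      calc ls_phi * (C :: L).length
          = ls_phi * L.length + ls_phi := by rw [List.length_cons]; push_cast; ring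
        _ ≤ (∑ τ : {x // x ∈ vars} → Bool,
              W τ * ((L.countP (fun D => decide (∃ l ∈ D, ext τ l.1 = l.2)) : ℕ) : ℝ))
            + ∑ τ : {x // x ∈ vars} → Bool,
              W τ * (if ∃ l ∈ C, ext τ l.1 = l.2 then (1 : ℝ) else 0) :=
            add_le_add ihL (hclause C hC)
        _ = ∑ τ : {x // x ∈ vars} → Bool,
              W τ * (((C :: L).countP (fun D => decide (∃ l ∈ D, ext τ l.1 = l.2)) : ℕ) : ℝ) := by
            rw [← Finset.sum_add_distrib]
            exact Finset.sum_congr rfl (fun τ _ => by rw [hcnt τ]; ring)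
  -- pick a maximizing assignment
  set N : ({x // x ∈ vars} → Bool) → ℕ :=
    fun τ => F.countP (fun C => decide (∃ l ∈ C, ext τ l.1 = l.2)) with hN
  obtain ⟨τ₀, -, hτ₀⟩ := Finset.exists_max_image Finset.univ N
    ⟨fun _ => false, Finset.mem_univ _⟩
  refine ⟨ext τ₀, ?_⟩
  have h1 := hmain F (fun C hC => hC)
  have h2 : ∑ τ : {x // x ∈ vars} → Bool, W τ * ((N τ : ℕ) : ℝ) ≤ ((N τ₀ : ℕ) : ℝ) := by
    calc ∑ τ : {x // x ∈ vars} → Bool, W τ * ((N τ : ℕ) : ℝ)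
        ≤ ∑ τ : {x // x ∈ vars} → Bool, W τ * ((N τ₀ : ℕ) : ℝ) :=
          Finset.sum_le_sum (fun τ _ =>
            mul_le_mul_of_nonneg_left (by exact_mod_cast hτ₀ τ (Finset.mem_univ τ)) (hW0 τ))
      _ = (∑ τ : {x // x ∈ vars} → Bool, W τ) * ((N τ₀ : ℕ) : ℝ) := by
          rw [← Finset.sum_mul]
      _ = ((N τ₀ : ℕ) : ℝ) := by rw [hWsum, one_mul]
  have hphi : (Real.sqrt 5 - 1) / 2 = ls_phi := rfl
  rw [hphi]
  linarith
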